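/- arXiv:1509.03855 — 2 statements merged into one kernel-verified Lean document; each statement's English description precedes it below -/
import Mathlib

section
/- Let X be a graph whose girth is greater than 2Δ + 4, and let Y₁, ..., Y_r be connected subgraphs of X each of diameter less than Δ + 2. Then the intersection Y₁ ∩ ⋯ ∩ Y_r (the subgraph with vertex set the intersection of vertex sets and edge set the intersection of edge sets) is connected, provided it is nonempty. -/
/-- A graph: a symmetric relation on a vertex type (loops allowed). -/
structure SymGraph (V : Type*) where
  adj : V → V → Prop
  symm : ∀ {x y : V}, adj x y → adj y x

variable {V : Type*}

/-- `X` has an embedded cycle of length `n`. -/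
def HasCycle (X : SymGraph V) (n : ℕ) : Prop :=
  ∃ φ : ZMod n → V, Function.Injective φ ∧ ∀ i, X.adj (φ i) (φ (i + 1))

/-- The girth of `X` is greater than `m`: no loops and no embedded cycle of
length at most `m`. -/
def GirthGT (X : SymGraph V) (m : ℕ) : Prop :=
  (∀ v, ¬ X.adj v v) ∧ ∀ n, 3 ≤ n → n ≤ m → ¬ HasCycle X n

/-- A subgraph of a graph `X`. -/
structure Subgraph (X : SymGraph V) where
  verts : Set V
  adj : V → V → Prop
  adj_sub : ∀ {x y}, adj x y → X.adj x y
  edge_vert : ∀ {x y}, adj x y → x ∈ verts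
  symm : ∀ {x y}, adj x y → adj y x

/-- A walk of length `n` inside a subgraph. -/
def Subgraph.Walk {X : SymGraph V} (Y : Subgraph X) (φ : ℕ → V) (n : ℕ) : Prop :=
  (∀ i ≤ n, φ i ∈ Y.verts) ∧ ∀ i < n, Y.adj (φ i) (φ (i + 1))

/-- A subgraph is connected if any two of its vertices are joined by a walk in it. -/
def Subgraph.Connected {X : SymGraph V} (Y : Subgraph X) : Prop :=
  ∀ x ∈ Y.verts, ∀ y ∈ Y.verts,
    ∃ n, ∃ φ : ℕ → V, Y.Walk φ n ∧ φ 0 = x ∧ φ n = y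

/-- The diameter of a subgraph is less than `m`: any two of its vertices are
joined by a walk in it of length less than `m`. -/
def Subgraph.DiamLT {X : SymGraph V} (Y : Subgraph X) (m : ℕ) : Prop :=
  ∀ x ∈ Y.verts, ∀ y ∈ Y.verts,
    ∃ n < m, ∃ φ : ℕ → V, Y.Walk φ n ∧ φ 0 = x ∧ φ n = y

/-- An injective path of length `n` in the ambient graph `X`. -/
def XPath (X : SymGraph V) (φ : ℕ → V) (n : ℕ) : Prop :=
  (∀ i < n, X.adj (φ i) (φ (i + 1))) ∧ ∀ i ≤ n, ∀ k ≤ n, φ i = φ k → i = k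

/-- From any walk in a subgraph one can extract an injective walk with the
same endpoints and length not larger. -/
lemma extract_path {X : SymGraph V} (Y : Subgraph X) :
    ∀ (n : ℕ) (φ : ℕ → V), Y.Walk φ n → ∃ m ≤ n, ∃ ψ : ℕ → V, Y.Walk ψ m ∧
      ψ 0 = φ 0 ∧ ψ m = φ n ∧ ∀ i ≤ m, ∀ k ≤ m, ψ i = ψ k → i = k := by
  intro n
  induction n using Nat.strong_induction_on with
  | _ n IH =>
    intro φ hw
    by_cases hinj : ∀ i ≤ n, ∀ k ≤ n, φ i = φ k → i = k
    · exact ⟨n, le_refl n, φ, hw, rfl, rfl, hinj⟩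
    · push_neg at hinj
      obtain ⟨i₀, hi₀, k₀, hk₀, heq₀, hne₀⟩ := hinj
      -- normalize to i < k
      obtain ⟨i, k, hik, hkn, heq⟩ : ∃ i k, i < k ∧ k ≤ n ∧ φ i = φ k := by
        rcases Nat.lt_or_ge i₀ k₀ with h | h
        · exact ⟨i₀, k₀, h, hk₀, heq₀⟩
        · exact ⟨k₀, i₀, by omega, hi₀, heq₀.symm⟩
      set n' := n - (k - i) with hn'
      set φ' : ℕ → V := fun t => if t ≤ i then φ t else φ (t + (k - i)) with hφ'
      have hn'lt : n' < n := by omega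
      have hwalk' : Y.Walk φ' n' := by
        constructor
        · intro t ht
          by_cases h : t ≤ i
          · simp only [hφ', if_pos h]; exact hw.1 t (by omega)
          · simp only [hφ', if_neg h]; exact hw.1 _ (by omega)
        · intro t ht
          by_cases h : t + 1 ≤ i
          · simp only [hφ', if_pos (by omega : t ≤ i), if_pos h]
            exact hw.2 t (by omega)
          · by_cases h2 : t ≤ i
            · -- t = i
              have hti : t = i := by omega
              simp only [hφ', if_pos h2, if_neg h]
              have : t + 1 + (k - i) = k + 1 := by omega
              rw [this, hti, heq]
              exact hw.2 k (by omega)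
            · simp only [hφ', if_neg h2, if_neg h]
              have : t + 1 + (k - i) = t + (k - i) + 1 := by omega
              rw [this]
              exact hw.2 _ (by omega)
      obtain ⟨m, hm, ψ, hψw, hψ0, hψm, hψinj⟩ := IH n' hn'lt φ' hwalk'
      refine ⟨m, by omega, ψ, hψw, ?_, ?_, hψinj⟩
      · rw [hψ0]; simp [hφ']
      · rw [hψm]
        by_cases h : n' ≤ i
        · have hni : n' = i := by omega
          have hkn' : k = n := by omega
          rw [hni]
          simp only [hφ', if_pos (le_refl i)]
          rw [heq, hkn']
        · simp only [hφ', if_neg h]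
          congr 1; omega

/-- Uniqueness of short injective paths in a graph of large girth. -/
lemma unique_path {X : SymGraph V} {m : ℕ} (hg : GirthGT X m) :
    ∀ (s a b : ℕ) (φ ψ : ℕ → V), a + b = s → s ≤ m → XPath X φ a → XPath X ψ b →
      φ 0 = ψ 0 → φ a = ψ b → a = b ∧ ∀ i ≤ a, φ i = ψ i := by
  intro s
  induction s using Nat.strong_induction_on with
  | _ s IH =>
    intro a b φ ψ hab hsm hφ hψ h0 hend
    rcases Nat.eq_zero_or_pos a with ha | ha
    · subst ha
      have hb : b = 0 := by
        have : ψ b = ψ 0 := by rw [← hend, ← h0]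
        exact hψ.2 b le_rfl 0 (Nat.zero_le _) this
      subst hb
      exact ⟨rfl, fun i hi => by interval_cases i; exact h0⟩
    rcases Nat.eq_zero_or_pos b with hb | hb
    · subst hb
      have ha0 : a = 0 := by
        have : φ a = φ 0 := by rw [hend, h0]
        exact hφ.2 a le_rfl 0 (Nat.zero_le _) this
      omega
    by_cases h1 : φ 1 = ψ 1
    · -- shift both paths and use induction
      have hφ' : XPath X (fun t => φ (t + 1)) (a - 1) := by
        constructor
        · intro t ht; exact hφ.1 (t + 1) (by omega)
        · intro t ht u hu h
          have := hφ.2 (t + 1) (by omega) (u + 1) (by omega) h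
          omega
      have hψ' : XPath X (fun t => ψ (t + 1)) (b - 1) := by
        constructor
        · intro t ht; exact hψ.1 (t + 1) (by omega)
        · intro t ht u hu h
          have := hψ.2 (t + 1) (by omega) (u + 1) (by omega) h
          omega
      have hs2 : (a - 1) + (b - 1) < s := by omega
      obtain ⟨hab', hall⟩ := IH ((a - 1) + (b - 1)) hs2 (a - 1) (b - 1) _ _ rfl
        (by omega) hφ' hψ' (by exact h1)
        (by show φ (a - 1 + 1) = ψ (b - 1 + 1); rw [Nat.sub_add_cancel ha, Nat.sub_add_cancel hb]; exact hend)
      refine ⟨by omega, fun i hi => ?_⟩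
      rcases Nat.eq_zero_or_pos i with hi0 | hi0
      · subst hi0; exact h0
      · have := hall (i - 1) (by omega)
        simpa [Nat.sub_add_cancel hi0] using this
    · -- build a cycle: contradiction
      exfalso
      classical
      have hS : ∃ i, 1 ≤ i ∧ i ≤ a ∧ ∃ j, j ≤ b ∧ φ i = ψ j := ⟨a, ha, le_rfl, b, le_rfl, hend⟩
      obtain ⟨i, ⟨hi1, hia, j, hjb, hij⟩, hmin⟩ :
          ∃ i, (1 ≤ i ∧ i ≤ a ∧ ∃ j, j ≤ b ∧ φ i = ψ j) ∧
            ∀ t, t < i → ¬(1 ≤ t ∧ t ≤ a ∧ ∃ j, j ≤ b ∧ φ t = ψ j) :=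
        ⟨Nat.find hS, Nat.find_spec hS, fun t ht => Nat.find_min hS ht⟩
      have hj1 : 1 ≤ j := by
        rcases Nat.eq_zero_or_pos j with hj0 | hj0
        · exfalso
          subst hj0
          have : φ i = φ 0 := by rw [hij, h0]
          have := hφ.2 i (by omega) 0 (Nat.zero_le _) this
          omega
        · exact hj0
      have h3 : 3 ≤ i + j := by
        by_contra hlt
        have hi1' : i = 1 := by omega
        have hj1' : j = 1 := by omega
        rw [hi1', hj1'] at hij
        exact h1 hij
      set N := i + j with hN
      haveI : NeZero N := ⟨by omega⟩
      haveI : Fact (1 < N) := ⟨by omega⟩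
      set c : ℕ → V := fun t => if t ≤ i then φ t else ψ (N - t) with hc
      -- mixed-case impossibility
      have hmixed : ∀ u v, u ≤ i → i < v → v < N → φ u ≠ ψ (N - v) := by
        intro u v hu hv hvN habs
        have hNv1 : 1 ≤ N - v := by omega
        have hNvj : N - v < j := by omega
        rcases Nat.eq_zero_or_pos u with hu0 | hu0
        · subst hu0
          have : ψ 0 = ψ (N - v) := by rw [← h0, habs]
          have := hψ.2 0 (Nat.zero_le _) (N - v) (by omega) this
          omega
        · rcases Nat.lt_or_ge u i with hui | hui
          · exact hmin u hui ⟨hu0, by omega, N - v, by omega, habs⟩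
          · have hui' : u = i := by omega
            subst hui'
            have : ψ j = ψ (N - v) := by rw [← hij, habs]
            have := hψ.2 j hjb (N - v) (by omega) this
            omega
      have hcinj : ∀ u v, u < N → v < N → c u = c v → u = v := by
        intro u v hu hv huv
        by_cases h : u ≤ i <;> by_cases h' : v ≤ i
        · simp only [hc, if_pos h, if_pos h'] at huv
          exact hφ.2 u (by omega) v (by omega) huv
        · simp only [hc, if_pos h, if_neg h'] at huv
          exact absurd huv (hmixed u v h (by omega) hv)
        · simp only [hc, if_neg h, if_pos h'] at huv
          exact absurd huv.symm (hmixed v u h' (by omega) hu)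
        · simp only [hc, if_neg h, if_neg h'] at huv
          have := hψ.2 (N - u) (by omega) (N - v) (by omega) huv
          omega
      have hcadj : ∀ u, u < N → X.adj (c u) (c ((u + 1) % N)) := by
        intro u hu
        rcases Nat.lt_or_ge (u + 1) N with hu1 | hu1
        · rw [Nat.mod_eq_of_lt hu1]
          by_cases h : u + 1 ≤ i
          · simp only [hc, if_pos (by omega : u ≤ i), if_pos h]
            exact hφ.1 u (by omega)
          · by_cases h2 : u ≤ i
            · have hui : u = i := by omega
              simp only [hc, if_pos h2, if_neg h]
              subst hui
              have hNu : N - (u + 1) = j - 1 := by omega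
              rw [hNu, hij]
              have : j - 1 + 1 = j := by omega
              have hadj := hψ.1 (j - 1) (by omega)
              rw [this] at hadj
              exact X.symm hadj
            · simp only [hc, if_neg h2, if_neg h]
              have h1' : N - u = (N - (u + 1)) + 1 := by omega
              have hadj := hψ.1 (N - (u + 1)) (by omega)
              rw [← h1'] at hadj
              exact X.symm hadj
        · have huN : u = N - 1 := by omega
          have : (u + 1) % N = 0 := by
            have : u + 1 = N := by omega
            simp [this]
          rw [this]
          subst huN
          have hc0 : c 0 = ψ 0 := by simp only [hc, if_pos (Nat.zero_le _)]; exact h0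
          have hcN : c (N - 1) = ψ 1 := by
            by_cases h : N - 1 ≤ i
            · have hni : N - 1 = i := by omega
              have hj1' : j = 1 := by omega
              show c (N - 1) = ψ 1
              rw [hni]
              simp only [hc, if_pos (le_refl i)]
              rw [hij, hj1']
            · simp only [hc, if_neg h]
              congr 1; omega
          rw [hc0, hcN]
          exact X.symm (hψ.1 0 (by omega))
      apply hg.2 N h3 (by omega)
      refine ⟨fun z => c z.val, ?_, ?_⟩
      · intro z w hzw
        have := hcinj z.val w.val z.val_lt w.val_lt hzw
        exact ZMod.val_injective N this
      · intro z
        have hval : (z + 1).val = (z.val + 1) % N := by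
          rw [ZMod.val_add, ZMod.val_one]
        show X.adj (c z.val) (c (z + 1).val)
        rw [hval]
        exact hcadj z.val z.val_lt

/-- If the girth of `X` is greater than `2Δ + 4` and `Y₁, …, Y_r` are connected
subgraphs of `X` of diameter less than `Δ + 2`, then their intersection
(vertexwise and edgewise) is connected: any two vertices of the intersection
are joined by a walk lying in the intersection. -/
theorem stmt_1 (X : SymGraph V) (Δ : ℕ) (hΔ : 0 < Δ)
    (hgirth : GirthGT X (2 * Δ + 4))
    (r : ℕ) (hr : 0 < r) (Y : Fin r → Subgraph X)
    (hconn : ∀ j, (Y j).Connected) (hdiam : ∀ j, (Y j).DiamLT (Δ + 2))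
    (x : V) (hx : ∀ j, x ∈ (Y j).verts)
    (y : V) (hy : ∀ j, y ∈ (Y j).verts) :
    ∃ n, ∃ φ : ℕ → V, φ 0 = x ∧ φ n = y ∧
      (∀ i ≤ n, ∀ j, φ i ∈ (Y j).verts) ∧
      (∀ i < n, ∀ j, (Y j).adj (φ i) (φ (i + 1))) := by
  classical
  have hex : ∀ j : Fin r, ∃ m ≤ Δ + 1, ∃ ψ : ℕ → V, (Y j).Walk ψ m ∧ ψ 0 = x ∧ ψ m = y ∧
      ∀ i ≤ m, ∀ k ≤ m, ψ i = ψ k → i = k := by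
    intro j
    obtain ⟨n, hn, φ, hw, hφ0, hφn⟩ := hdiam j x (hx j) y (hy j)
    obtain ⟨m, hmn, ψ, hψw, hψ0, hψm, hinj⟩ := extract_path (Y j) n φ hw
    exact ⟨m, by omega, ψ, hψw, by rw [hψ0, hφ0], by rw [hψm, hφn], hinj⟩
  choose m hm ψ hw h0 hend hinj using hex
  set j0 : Fin r := ⟨0, hr⟩
  have hpath : ∀ j, XPath X (ψ j) (m j) := fun j =>
    ⟨fun i hi => (Y j).adj_sub ((hw j).2 i hi), hinj j⟩
  have hkey : ∀ j, m j0 = m j ∧ ∀ i ≤ m j0, ψ j0 i = ψ j i := by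
    intro j
    exact unique_path hgirth (m j0 + m j) (m j0) (m j) (ψ j0) (ψ j) rfl
      (by have := hm j0; have := hm j; omega)
      (hpath j0) (hpath j) (by rw [h0 j0, h0 j]) (by rw [hend j0, hend j])
  refine ⟨m j0, ψ j0, h0 j0, hend j0, ?_, ?_⟩
  · intro i hi j
    rw [(hkey j).2 i hi]
    exact (hw j).1 i (by rw [← (hkey j).1]; exact hi)
  · intro i hi j
    have h1 := (hkey j).2 i (by omega)
    have h2 := (hkey j).2 (i + 1) (by omega)
    rw [h1, h2]
    exact (hw j).2 i (by rw [← (hkey j).1]; exact hi)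
end

section
/- Let G be a graph and e = ⟨v,w⟩ an edge of G such that there is no graph homomorphism L_3 → G ∖ e sending 0 to v and 3 to w. Then the inverse image under the induced map r_{e*} : B(G_e) → B(G) of the element ({v}, {w}) is exactly the five-element chain-like poset { ({v},{0}), ({v,1},{0}), ({1},{0}), ({1},{0,w}), ({1},{w}) }, whose order complex is an interval (contractible 1-dimensional complex). -/
/-- A graph: a symmetric relation on a vertex type (loops allowed). -/
structure SGraph (V : Type*) where
  adj : V → V → Prop
  symm : ∀ {x y : V}, adj x y → adj y x

variable {V : Type*}

/-- `f` is a graph homomorphism from `G` to `H`. -/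
def IsGraphHom {W : Type*} (G : SGraph V) (H : SGraph W) (f : V → W) : Prop :=
  ∀ {x y : V}, G.adj x y → H.adj (f x) (f y)

/-- The path graph `L₃` on vertices `0,1,2,3`. -/
def L3 : SGraph (Fin 4) where
  adj i j := (i : ℕ) + 1 = j ∨ (j : ℕ) + 1 = i
  symm h := h.symm

/-- The graph `G ∖ e` obtained from `G` by deleting the edge `e = ⟨v,w⟩`. -/
def delEdge (G : SGraph V) (v w : V) : SGraph V where
  adj x y := G.adj x y ∧ ¬ ((x = v ∧ y = w) ∨ (x = w ∧ y = v))
  symm h := ⟨G.symm h.1, fun hc => h.2 (by tauto)⟩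

/-- The subdivision `G_e` of `G` at `e = ⟨v,w⟩`: delete `e`, add new vertices
`0 = Sum.inr false` and `1 = Sum.inr true` with edges `⟨0,1⟩, ⟨0,v⟩, ⟨1,w⟩`. -/
def subdiv (G : SGraph V) (v w : V) : SGraph (V ⊕ Bool) where
  adj a b :=
    match a, b with
    | .inl x, .inl y => G.adj x y ∧ ¬ ((x = v ∧ y = w) ∨ (x = w ∧ y = v))
    | .inl x, .inr c => (c = false ∧ x = v) ∨ (c = true ∧ x = w)
    | .inr c, .inl x => (c = false ∧ x = v) ∨ (c = true ∧ x = w)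
    | .inr c, .inr d => c ≠ d
  symm := by
    rintro (x | c) (y | d) h
    · exact ⟨G.symm h.1, fun hc => h.2 (by tauto)⟩
    · exact h
    · exact h
    · exact h.symm

/-- The natural map `r_e : G_e → G`: identity on `V(G)`, `0 ↦ w`, `1 ↦ v`. -/
def retr (v w : V) : V ⊕ Bool → V :=
  Sum.elim id (fun c => if c then v else w)

/-- `p = (σ,τ)` is an element of the box complex `B(H) = Hom(K₂,H)`. -/
def IsBoxPair {W : Type*} (H : SGraph W) (p : Set W × Set W) : Prop :=
  p.1.Nonempty ∧ p.2.Nonempty ∧ ∀ a ∈ p.1, ∀ b ∈ p.2, H.adj a b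

/-- Componentwise inclusion of pairs of sets, i.e. the order of `B(H)`. -/
def pairLE {W : Type*} (p q : Set W × Set W) : Prop :=
  p.1 ⊆ q.1 ∧ p.2 ⊆ q.2

/-- The inverse image of `({v},{w})` under `r_{e∗} : B(G_e) → B(G)` is exactly
the five-element poset `{({v},{0}), ({v,1},{0}), ({1},{0}), ({1},{0,w}),
({1},{w})}`, which forms a zigzag chain (its order complex is an interval). -/
theorem stmt_5 (G : SGraph V) (v w : V) (he : G.adj v w) (hne : v ≠ w)
    (hL : ¬ ∃ f : Fin 4 → V, IsGraphHom L3 (delEdge G v w) f ∧ f 0 = v ∧ f 3 = w) :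
    (∀ p : Set (V ⊕ Bool) × Set (V ⊕ Bool),
      (IsBoxPair (subdiv G v w) p ∧
          retr v w '' p.1 = {v} ∧ retr v w '' p.2 = {w}) ↔
        p ∈ ({ ({Sum.inl v}, {Sum.inr false}),
               ({Sum.inl v, Sum.inr true}, {Sum.inr false}),
               ({Sum.inr true}, {Sum.inr false}),
               ({Sum.inr true}, {Sum.inr false, Sum.inl w}),
               ({Sum.inr true}, {Sum.inl w}) } :
             Set (Set (V ⊕ Bool) × Set (V ⊕ Bool)))) ∧
    pairLE (({Sum.inl v}, {Sum.inr false}) : Set (V ⊕ Bool) × Set (V ⊕ Bool))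
      ({Sum.inl v, Sum.inr true}, {Sum.inr false}) ∧
    pairLE (({Sum.inr true}, {Sum.inr false}) : Set (V ⊕ Bool) × Set (V ⊕ Bool))
      ({Sum.inl v, Sum.inr true}, {Sum.inr false}) ∧
    pairLE (({Sum.inr true}, {Sum.inr false}) : Set (V ⊕ Bool) × Set (V ⊕ Bool))
      ({Sum.inr true}, {Sum.inr false, Sum.inl w}) ∧
    pairLE (({Sum.inr true}, {Sum.inl w}) : Set (V ⊕ Bool) × Set (V ⊕ Bool))
      ({Sum.inr true}, {Sum.inr false, Sum.inl w}) ∧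
    List.Pairwise (· ≠ ·)
      ([ ({Sum.inl v}, {Sum.inr false}),
         ({Sum.inl v, Sum.inr true}, {Sum.inr false}),
         ({Sum.inr true}, {Sum.inr false}),
         ({Sum.inr true}, {Sum.inr false, Sum.inl w}),
         ({Sum.inr true}, {Sum.inl w}) ] :
        List (Set (V ⊕ Bool) × Set (V ⊕ Bool))) := by

  classical
  constructor
  · intro p
    constructor
    · rintro ⟨⟨⟨a, ha⟩, ⟨b, hb⟩, hadj⟩, h1, h2⟩
      have hs : ∀ x ∈ p.1, x = Sum.inl v ∨ x = Sum.inr true := by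
        intro x hx
        have hx' : retr v w x ∈ ({v} : Set V) := h1 ▸ ⟨x, hx, rfl⟩
        match x with
        | .inl a =>
          simp only [retr, Sum.elim_inl, id, Set.mem_singleton_iff] at hx'
          exact Or.inl (by rw [hx'])
        | .inr true => exact Or.inr rfl
        | .inr false =>
          simp only [retr, Sum.elim_inr, if_neg, Set.mem_singleton_iff] at hx'
          exact absurd hx'.symm hne
      have ht : ∀ x ∈ p.2, x = Sum.inl w ∨ x = Sum.inr false := by
        intro x hx
        have hx' : retr v w x ∈ ({w} : Set V) := h2 ▸ ⟨x, hx, rfl⟩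
        match x with
        | .inl a =>
          simp only [retr, Sum.elim_inl, id, Set.mem_singleton_iff] at hx'
          exact Or.inl (by rw [hx'])
        | .inr false => exact Or.inr rfl
        | .inr true =>
          simp only [retr, Sum.elim_inr, if_pos, Set.mem_singleton_iff] at hx'
          exact absurd hx' hne
      have hexcl : ¬ (Sum.inl v ∈ p.1 ∧ Sum.inl w ∈ p.2) := by
        rintro ⟨hv1, hw2⟩
        exact (hadj _ hv1 _ hw2).2 (Or.inl ⟨rfl, rfl⟩)
      have hA : p.1 = {Sum.inl v} ∨ p.1 = {Sum.inr true} ∨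
          p.1 = ({Sum.inl v, Sum.inr true} : Set (V ⊕ Bool)) := by
        by_cases hv1 : Sum.inl v ∈ p.1 <;> by_cases ht1 : Sum.inr true ∈ p.1
        · right; right
          apply Set.Subset.antisymm
          · intro x hx; rcases hs x hx with rfl | rfl <;> simp
          · intro x hx
            simp only [Set.mem_insert_iff, Set.mem_singleton_iff] at hx
            rcases hx with rfl | rfl <;> assumption
        · left
          apply Set.Subset.antisymm
          · intro x hx
            rcases hs x hx with rfl | rfl
            · simp
            · exact absurd hx ht1
          · intro x hx
            rw [Set.mem_singleton_iff] at hx; subst hx; exact hv1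
        · right; left
          apply Set.Subset.antisymm
          · intro x hx
            rcases hs x hx with rfl | rfl
            · exact absurd hx hv1
            · simp
          · intro x hx
            rw [Set.mem_singleton_iff] at hx; subst hx; exact ht1
        · exfalso; rcases hs a ha with rfl | rfl <;> contradiction
      have hB : p.2 = {Sum.inr false} ∨ p.2 = {Sum.inl w} ∨
          p.2 = ({Sum.inr false, Sum.inl w} : Set (V ⊕ Bool)) := by
        by_cases hw2 : Sum.inl w ∈ p.2 <;> by_cases hf2 : Sum.inr false ∈ p.2
        · right; right
          apply Set.Subset.antisymm
          · intro x hx; rcases ht x hx with rfl | rfl <;> simp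
          · intro x hx
            simp only [Set.mem_insert_iff, Set.mem_singleton_iff] at hx
            rcases hx with rfl | rfl <;> assumption
        · right; left
          apply Set.Subset.antisymm
          · intro x hx
            rcases ht x hx with rfl | rfl
            · simp
            · exact absurd hx hf2
          · intro x hx
            rw [Set.mem_singleton_iff] at hx; subst hx; exact hw2
        · left
          apply Set.Subset.antisymm
          · intro x hx
            rcases ht x hx with rfl | rfl
            · exact absurd hx hw2
            · simp
          · intro x hx
            rw [Set.mem_singleton_iff] at hx; subst hx; exact hf2
        · exfalso; rcases ht b hb with rfl | rfl <;> contradiction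
      simp only [Set.mem_insert_iff, Set.mem_singleton_iff, Prod.ext_iff]
      rcases hA with h | h | h <;> rcases hB with h' | h' | h'
      · tauto
      · exact absurd ⟨by rw [h]; simp, by rw [h']; simp⟩ hexcl
      · exact absurd ⟨by rw [h]; simp, by rw [h']; simp⟩ hexcl
      · tauto
      · tauto
      · tauto
      · tauto
      · exact absurd ⟨by rw [h]; simp, by rw [h']; simp⟩ hexcl
      · exact absurd ⟨by rw [h]; simp, by rw [h']; simp⟩ hexcl
    · intro hp
      simp only [Set.mem_insert_iff, Set.mem_singleton_iff] at hp
      rcases hp with rfl | rfl | rfl | rfl | rfl <;>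
        refine ⟨⟨?_, ?_, ?_⟩, ?_, ?_⟩ <;>
        first
          | exact Set.singleton_nonempty _
          | exact Set.insert_nonempty _ _
          | (rintro a (rfl | rfl) b (rfl | rfl) <;> exact Or.inl ⟨rfl, rfl⟩)
          | (rintro a (rfl | rfl) b (rfl | rfl) <;>
              first
                | exact Or.inl ⟨rfl, rfl⟩
                | exact Or.inr ⟨rfl, rfl⟩
                | simp [subdiv])
          | simp [retr, Set.image_insert_eq, Set.image_singleton, Set.pair_eq_singleton]
  refine ⟨⟨by simp, subset_rfl⟩, ⟨by simp, subset_rfl⟩, ⟨subset_rfl, by simp⟩,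
    ⟨subset_rfl, by simp⟩, ?_⟩
  have hvt : ({Sum.inl v} : Set (V ⊕ Bool)) ≠ {Sum.inl v, Sum.inr true} := by
    intro h
    have : (Sum.inr true : V ⊕ Bool) ∈ ({Sum.inl v} : Set (V ⊕ Bool)) := by rw [h]; simp
    simp at this
  have hvt2 : ({Sum.inl v} : Set (V ⊕ Bool)) ≠ {Sum.inr true} := by
    intro h
    have : (Sum.inr true : V ⊕ Bool) ∈ ({Sum.inl v} : Set (V ⊕ Bool)) := by rw [h]; simp
    simp at this
  have hvt3 : ({Sum.inl v, Sum.inr true} : Set (V ⊕ Bool)) ≠ {Sum.inr true} := by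
    intro h
    have : (Sum.inl v : V ⊕ Bool) ∈ ({Sum.inr true} : Set (V ⊕ Bool)) := by rw [← h]; simp
    simp at this
  have hfw : ({Sum.inr false} : Set (V ⊕ Bool)) ≠ {Sum.inr false, Sum.inl w} := by
    intro h
    have : (Sum.inl w : V ⊕ Bool) ∈ ({Sum.inr false} : Set (V ⊕ Bool)) := by rw [h]; simp
    simp at this
  have hfw2 : ({Sum.inr false} : Set (V ⊕ Bool)) ≠ {Sum.inl w} := by
    intro h
    have : (Sum.inl w : V ⊕ Bool) ∈ ({Sum.inr false} : Set (V ⊕ Bool)) := by rw [h]; simp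
    simp at this
  have hfw3 : ({Sum.inr false, Sum.inl w} : Set (V ⊕ Bool)) ≠ {Sum.inl w} := by
    intro h
    have : (Sum.inr false : V ⊕ Bool) ∈ ({Sum.inl w} : Set (V ⊕ Bool)) := by rw [← h]; simp
    simp at this
  refine List.pairwise_cons.2 ⟨?_, List.pairwise_cons.2 ⟨?_, List.pairwise_cons.2 ⟨?_,
    List.pairwise_cons.2 ⟨?_, List.pairwise_cons.2 ⟨fun p hp => absurd hp (List.not_mem_nil (a := p)),
      List.Pairwise.nil⟩⟩⟩⟩⟩ <;>
  · intro p hp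
    simp only [List.mem_cons, List.mem_singleton, List.not_mem_nil, or_false] at hp
    first
      | (rcases hp with rfl | rfl | rfl | rfl) | (rcases hp with rfl | rfl | rfl)
      | (rcases hp with rfl | rfl) | (subst hp)
    all_goals simp only [ne_eq, Prod.mk.injEq, not_and] <;> tauto
end
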